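/- For every u₁ > 0 and every k with 2 ≤ k ≤ n, the derivative with respect to u₁ of the function u₁ ↦ (U_k(u₁) − U_{k−1}(u₁))/g₁(U_k(u₁)) is strictly negative. -/

import Mathlib

open Finset

noncomputable def U (g1 : ℝ → ℝ) (h : ℝ) : ℕ → ℝ → ℝ
  | 0, u => u
  | 1, u => u
  | 2, u => u + h ^ 2 / 2 * g1 u
  | k + 3, u => 2 * U g1 h (k + 2) u - U g1 h (k + 1) u + h ^ 2 * g1 (U g1 h (k + 2) u)

noncomputable def W (g1 : ℝ → ℝ) (h : ℝ) : ℕ → ℝ → ℝ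
  | 0, _ => 1
  | 1, _ => 1
  | 2, u => 1 + h ^ 2 / 2 * deriv g1 u
  | k + 3, u => 2 * W g1 h (k + 2) u - W g1 h (k + 1) u
      + h ^ 2 * (deriv g1 (U g1 h (k + 2) u) * W g1 h (k + 2) u)

lemma hasDerivAt_U (g1 : ℝ → ℝ) (hd : Differentiable ℝ g1) (h : ℝ) (u : ℝ) :
    ∀ k, HasDerivAt (fun x => U g1 h k x) (W g1 h k u) u := by
  intro k
  induction k using Nat.strong_induction_on with
  | _ k ih =>
    match k, ih with
    | 0, _ => simpa [U, W] using hasDerivAt_id' u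
    | 1, _ => simpa [U, W] using hasDerivAt_id' u
    | 2, _ =>
      have : HasDerivAt (fun x => x + h ^ 2 / 2 * g1 x) (1 + h ^ 2 / 2 * deriv g1 u) u :=
        (hasDerivAt_id u).add (((hd u).hasDerivAt).const_mul (h ^ 2 / 2))
      simpa [U, W] using this
    | (k + 3), ih =>
      have h2 := ih (k + 2) (by omega)
      have h1 := ih (k + 1) (by omega)
      have hcomp : HasDerivAt (fun x => g1 (U g1 h (k + 2) x))
          (deriv g1 (U g1 h (k + 2) u) * W g1 h (k + 2) u) u :=
        (hd (U g1 h (k + 2) u)).hasDerivAt.comp u h2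
      have : HasDerivAt
          (fun x => 2 * U g1 h (k + 2) x - U g1 h (k + 1) x + h ^ 2 * g1 (U g1 h (k + 2) x))
          (2 * W g1 h (k + 2) u - W g1 h (k + 1) u
            + h ^ 2 * (deriv g1 (U g1 h (k + 2) u) * W g1 h (k + 2) u)) u :=
        ((h2.const_mul 2).sub h1).add (hcomp.const_mul (h ^ 2))
      simpa [U, W] using this

lemma main_aux (g1 : ℝ → ℝ)
    (hg1pos : ∀ x > 0, 0 < g1 x)
    (hg1d1 : ∀ x > 0, 0 < deriv g1 x)
    (hmono : ∀ a b : ℝ, 0 < a → a < b → deriv g1 a < deriv g1 b)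
    (hmvt : ∀ a b : ℝ, 0 < a → a < b → g1 b - g1 a < deriv g1 b * (b - a))
    (h : ℝ) (hh : 0 < h) (u1 : ℝ) (hu1 : 0 < u1) :
    ∀ m : ℕ, (0 < U g1 h (m + 1) u1) ∧ (U g1 h (m + 1) u1 < U g1 h (m + 2) u1)
      ∧ (0 < W g1 h (m + 1) u1) ∧ (W g1 h (m + 1) u1 < W g1 h (m + 2) u1)
      ∧ ((W g1 h (m + 2) u1 - W g1 h (m + 1) u1) * g1 (U g1 h (m + 2) u1)
          - (U g1 h (m + 2) u1 - U g1 h (m + 1) u1)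
            * (deriv g1 (U g1 h (m + 2) u1) * W g1 h (m + 2) u1) < 0) := by
  have hh2 : 0 < h ^ 2 := by positivity
  intro m
  induction m with
  | zero =>
    have hU1 : U g1 h 1 u1 = u1 := by simp [U]
    have hU2 : U g1 h 2 u1 = u1 + h ^ 2 / 2 * g1 u1 := by simp [U]
    have hW1 : W g1 h 1 u1 = 1 := by simp [W]
    have hW2 : W g1 h 2 u1 = 1 + h ^ 2 / 2 * deriv g1 u1 := by simp [W]
    have hg1u : 0 < g1 u1 := hg1pos u1 hu1
    have hdu : 0 < deriv g1 u1 := hg1d1 u1 hu1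
    have hlt : u1 < U g1 h 2 u1 := by rw [hU2]; nlinarith
    have hmvt' := hmvt u1 (U g1 h 2 u1) hu1 hlt
    have hmono' := hmono u1 (U g1 h 2 u1) hu1 hlt
    refine ⟨by rwa [hU1], by rwa [hU1], by rw [hW1]; norm_num, by rw [hW1, hW2]; nlinarith, ?_⟩
    rw [hU1, hU2, hW1, hW2]
    have hdU2 : 0 < deriv g1 (U g1 h 2 u1) := hg1d1 _ (lt_trans hu1 hlt)
    rw [hU2] at hmvt' hmono' hdU2
    nlinarith [mul_pos hh2 hdu, mul_pos hh2 hg1u]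
  | succ m IH =>
    obtain ⟨hu_pos, hu_lt, hw_pos, hw_lt, hA⟩ := IH
    set a1 := U g1 h (m + 1) u1
    set a2 := U g1 h (m + 2) u1
    set w1 := W g1 h (m + 1) u1
    set w2 := W g1 h (m + 2) u1
    have hU3 : U g1 h (m + 3) u1 = 2 * a2 - a1 + h ^ 2 * g1 a2 := by
      simp [U, a1, a2]
    have hW3 : W g1 h (m + 3) u1 = 2 * w2 - w1 + h ^ 2 * (deriv g1 a2 * w2) := by
      simp [W, a1, a2, w1, w2]
    have ha2pos : 0 < a2 := lt_trans hu_pos hu_lt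
    have hga2 : 0 < g1 a2 := hg1pos a2 ha2pos
    have hda2 : 0 < deriv g1 a2 := hg1d1 a2 ha2pos
    have hw2pos : 0 < w2 := lt_trans hw_pos hw_lt
    have hu_lt3 : a2 < U g1 h (m + 3) u1 := by rw [hU3]; nlinarith
    have hw_lt3 : w2 < W g1 h (m + 3) u1 := by rw [hW3]; nlinarith
    have hmvt' := hmvt a2 (U g1 h (m + 3) u1) ha2pos hu_lt3
    have hmono' := hmono a2 (U g1 h (m + 3) u1) ha2pos hu_lt3
    refine ⟨ha2pos, hu_lt3, hw2pos, hw_lt3, ?_⟩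
    -- abbreviations for the new level
    set b := g1 (U g1 h (m + 3) u1) with hb
    set db := deriv g1 (U g1 h (m + 3) u1) with hdb
    set Dn := U g1 h (m + 3) u1 - a2 with hDn
    set Zn := W g1 h (m + 3) u1 - w2 with hZn
    have hDn' : Dn = (a2 - a1) + h ^ 2 * g1 a2 := by rw [hDn, hU3]; ring
    have hZn' : Zn = (w2 - w1) + h ^ 2 * (deriv g1 a2 * w2) := by rw [hZn, hW3]; ring
    have hDnpos : 0 < Dn := by rw [hDn]; linarith
    have hZnpos : 0 < Zn := by rw [hZn]; linarith
    have hmvt2 : b < g1 a2 + db * Dn := by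
      have : b - g1 a2 < db * Dn := by rw [hDn]; exact hmvt'
      linarith
    -- goal : Zn * b - Dn * (db * (w2 + Zn)) < 0
    have hgoal : Zn * b - Dn * (db * (w2 + Zn)) < 0 := by
      have step1 : Zn * b < Zn * (g1 a2 + db * Dn) := by
        exact mul_lt_mul_of_pos_left hmvt2 hZnpos
      have step2 : deriv g1 a2 * (Dn * w2) ≤ db * (Dn * w2) :=
        mul_le_mul_of_nonneg_right (le_of_lt hmono')
          (le_of_lt (mul_pos hDnpos hw2pos))
      have step3 : Zn * g1 a2 - deriv g1 a2 * (Dn * w2)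
          = (w2 - w1) * g1 a2 - (a2 - a1) * (deriv g1 a2 * w2) := by
        rw [hDn', hZn']; ring
      nlinarith
    have hW3' : W g1 h (m + 3) u1 = w2 + Zn := by rw [hZn]; ring
    have hU3' : U g1 h (m + 3) u1 - a2 = Dn := by rw [hDn]
    calc (W g1 h (m + 3) u1 - w2) * b - (U g1 h (m + 3) u1 - a2) * (db * W g1 h (m + 3) u1)
        = Zn * b - Dn * (db * (w2 + Zn)) := by rw [hU3', hW3']; ring
      _ < 0 := hgoal

theorem stmt5
    (g1 g2 : ℝ → ℝ)
    (hg1C : ContDiff ℝ 3 g1) (hg2C : ContDiff ℝ 3 g2)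
    (hg1A : AnalyticAt ℝ g1 0) (hg2A : AnalyticAt ℝ g2 0)
    (hg10 : g1 0 = 0) (hg20 : g2 0 = 0)
    (hg1d1 : ∀ x > 0, 0 < deriv g1 x) (hg2d1 : ∀ x > 0, 0 < deriv g2 x)
    (hg1d2 : ∀ x > 0, 0 < iteratedDeriv 2 g1 x) (hg2d2 : ∀ x > 0, 0 < iteratedDeriv 2 g2 x)
    (hg1d3 : ∀ x > 0, 0 ≤ iteratedDeriv 3 g1 x) (hg2d3 : ∀ x > 0, 0 ≤ iteratedDeriv 3 g2 x)
    (n : ℕ) (hn : 2 ≤ n) (h : ℝ) (hh : h = 1 / ((n : ℝ) - 1))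
    (u1 : ℝ) (hu1 : 0 < u1) (k : ℕ) (hk2 : 2 ≤ k) (hkn : k ≤ n) :
    deriv (fun x => (U g1 h k x - U g1 h (k - 1) x) / g1 (U g1 h k x)) u1 < 0 := by
  have hd : Differentiable ℝ g1 := hg1C.differentiable (by norm_num)
  have hn1 : (0 : ℝ) < (n : ℝ) - 1 := by
    have : (2 : ℝ) ≤ (n : ℝ) := by exact_mod_cast hn
    linarith
  have hh0 : 0 < h := by rw [hh]; positivity
  -- g1 positive on positives
  have hmono_g1 : StrictMonoOn g1 (Set.Ici 0) := by
    apply strictMonoOn_of_deriv_pos (convex_Ici 0) hg1C.continuous.continuousOn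
    intro x hx
    rw [interior_Ici] at hx
    exact hg1d1 x hx
  have hg1pos : ∀ x > 0, 0 < g1 x := by
    intro x hx
    have := hmono_g1 (Set.self_mem_Ici) (le_of_lt hx : (0:ℝ) ≤ x) hx
    rwa [hg10] at this
  -- deriv g1 strictly monotone on Ici 0
  have hcderiv : Continuous (deriv g1) := hg1C.continuous_deriv (by norm_num)
  have hmono_d : StrictMonoOn (deriv g1) (Set.Ici 0) := by
    apply strictMonoOn_of_deriv_pos (convex_Ici 0) hcderiv.continuousOn
    intro x hx
    rw [interior_Ici] at hx
    have := hg1d2 x hx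
    rwa [show (2:ℕ) = 1 + 1 from rfl, iteratedDeriv_succ, iteratedDeriv_one] at this
  have hmono : ∀ a b : ℝ, 0 < a → a < b → deriv g1 a < deriv g1 b := fun a b ha hab =>
    hmono_d (le_of_lt ha) (le_of_lt (lt_trans ha hab)) hab
  -- strict MVT bound
  have hmvt : ∀ a b : ℝ, 0 < a → a < b → g1 b - g1 a < deriv g1 b * (b - a) := by
    intro a b ha hab
    obtain ⟨c, hc, hc'⟩ := exists_deriv_eq_slope g1 hab hg1C.continuous.continuousOn
      (fun x _ => (hd x).differentiableWithinAt)
    have hcpos : 0 < c := lt_trans ha hc.1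
    have hlt : deriv g1 c < deriv g1 b :=
      hmono_d (le_of_lt hcpos) (le_of_lt (lt_trans hcpos hc.2)) hc.2
    have hba : 0 < b - a := by linarith
    have : (g1 b - g1 a) / (b - a) < deriv g1 b := by rw [← hc']; exact hlt
    calc g1 b - g1 a = (g1 b - g1 a) / (b - a) * (b - a) := by field_simp
      _ < deriv g1 b * (b - a) := by exact mul_lt_mul_of_pos_right this hba
  -- set k = j + 2
  obtain ⟨j, rfl⟩ : ∃ j, k = j + 2 := ⟨k - 2, by omega⟩
  have hk1 : j + 2 - 1 = j + 1 := by omega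
  rw [hk1]
  obtain ⟨hu_pos, hu_lt, hw_pos, hw_lt, hA⟩ :=
    main_aux g1 hg1pos hg1d1 hmono hmvt h hh0 u1 hu1 j
  have hU2 := hasDerivAt_U g1 hd h u1 (j + 2)
  have hU1 := hasDerivAt_U g1 hd h u1 (j + 1)
  have ha2pos : 0 < U g1 h (j + 2) u1 := lt_trans hu_pos hu_lt
  have hga2 : 0 < g1 (U g1 h (j + 2) u1) := hg1pos _ ha2pos
  have hden : HasDerivAt (fun x => g1 (U g1 h (j + 2) x))
      (deriv g1 (U g1 h (j + 2) u1) * W g1 h (j + 2) u1) u1 :=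
    (hd _).hasDerivAt.comp u1 hU2
  have hF : HasDerivAt (fun x => (U g1 h (j + 2) x - U g1 h (j + 1) x) / g1 (U g1 h (j + 2) x)) _ u1 :=
    (hU2.sub hU1).div hden (ne_of_gt hga2)
  rw [hF.deriv]
  apply div_neg_of_neg_of_pos
  · exact hA
  · positivity
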